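/- arXiv:1311.7278 — 4 statements merged into one kernel-verified Lean document; each statement's English description precedes it below -/
import Mathlib

section
/- Let x_1, ..., x_s be distinct n-bit strings viewed as integers less than 2^(n+1), let 0 < δ < 1 be rational, let p_1, ..., p_t be the first t = ⌈(1/δ)·s·n⌉ prime numbers. Then for every i ≤ s, the number of primes p among p_1,...,p_t for which there exists j ≠ i with x_i ≡ x_j (mod p) is strictly less than δ·t. -/
open scoped Classical

lemma card_primeFactors_le (m n : ℕ) (hm : m ≠ 0) (hlt : m < 2 ^ (n + 1)) :
    m.primeFactors.card ≤ n := by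
  by_contra h
  push_neg at h
  have h2 : 2 ^ m.primeFactors.card ≤ ∏ p ∈ m.primeFactors, p :=
    Finset.pow_card_le_prod _ _ _ (fun p hp => (Nat.prime_of_mem_primeFactors hp).two_le)
  have h3 : ∏ p ∈ m.primeFactors, p ≤ m :=
    Nat.le_of_dvd (Nat.pos_of_ne_zero hm) (Nat.prod_primeFactors_dvd m)
  have : 2 ^ (n + 1) ≤ 2 ^ m.primeFactors.card := Nat.pow_le_pow_right (by norm_num) h
  omega

lemma card_filter_dvd_le (t m n : ℕ) (hm : m ≠ 0) (hlt : m < 2 ^ (n + 1)) :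
    (Finset.univ.filter fun k : Fin t => Nat.nth Nat.Prime k ∣ m).card ≤ n := by
  refine le_trans (Finset.card_le_card_of_injOn (fun k : Fin t => Nat.nth Nat.Prime k)
    (fun k hk => ?_) (fun a _ b _ hab => ?_)) (card_primeFactors_le m n hm hlt)
  · simp only [Finset.mem_coe, Finset.mem_filter] at hk
    exact Nat.mem_primeFactors.mpr ⟨Nat.prime_nth_prime _, hk.2, hm⟩
  · exact Fin.val_injective (Nat.nth_injective Nat.infinite_setOf_prime hab)

/-- Let `x 0, ..., x (s-1)` be distinct `n`-bit strings viewed as integers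
`< 2^(n+1)`, let `0 < δ < 1` be rational, and let `t = ⌈(1/δ)·s·n⌉`. Then for every `i`,
the number of indices `k < t` such that the `k`-th prime `p` satisfies
`x i ≡ x j (mod p)` for some `j ≠ i` is strictly less than `δ·t`. -/
theorem stmt_0 (n s : ℕ) (hn : 1 ≤ n) (hs : 1 ≤ s)
    (x : Fin s → ℕ) (hinj : Function.Injective x) (hbound : ∀ i, x i < 2 ^ (n + 1))
    (δ : ℚ) (hδ0 : 0 < δ) (hδ1 : δ < 1)
    (t : ℕ) (ht : t = ⌈((s * n : ℕ) : ℚ) / δ⌉₊)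
    (i : Fin s) :
    ((Finset.univ.filter fun k : Fin t =>
        ∃ j : Fin s, j ≠ i ∧ x i ≡ x j [MOD Nat.nth Nat.Prime k]).card : ℚ) < δ * t := by
  set S := Finset.univ.filter fun k : Fin t =>
      ∃ j : Fin s, j ≠ i ∧ x i ≡ x j [MOD Nat.nth Nat.Prime k] with hS
  have hsub : S ⊆ (Finset.univ.erase i).biUnion
      (fun j => Finset.univ.filter fun k : Fin t =>
        Nat.nth Nat.Prime k ∣ ((x j : ℤ) - (x i : ℤ)).natAbs) := by
    intro k hk
    simp only [hS, Finset.mem_filter, Finset.mem_univ, true_and] at hk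
    obtain ⟨j, hj, hmod⟩ := hk
    apply Finset.mem_biUnion.mpr
    refine ⟨j, Finset.mem_erase.mpr ⟨hj, Finset.mem_univ _⟩, ?_⟩
    simp only [Finset.mem_filter, Finset.mem_univ, true_and]
    have := hmod.dvd
    exact Int.natAbs_dvd_natAbs.mpr (by simpa using this)
  have hcard : S.card ≤ (s - 1) * n := by
    calc S.card ≤ ∑ j ∈ Finset.univ.erase i,
        (Finset.univ.filter fun k : Fin t =>
          Nat.nth Nat.Prime k ∣ ((x j : ℤ) - (x i : ℤ)).natAbs).card :=
          le_trans (Finset.card_le_card hsub) (Finset.card_biUnion_le)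
      _ ≤ ∑ _j ∈ Finset.univ.erase i, n := by
          apply Finset.sum_le_sum
          intro j hj
          have hj' : j ≠ i := (Finset.mem_erase.mp hj).1
          have hne : x j ≠ x i := fun h => hj' (hinj h)
          apply card_filter_dvd_le
          · have hne' : (x j : ℤ) ≠ (x i : ℤ) := by exact_mod_cast hne
            omega
          · have h1 := hbound i
            have h2 := hbound j
            generalize 2 ^ (n + 1) = B at h1 h2 ⊢
            omega
      _ ≤ (s - 1) * n := by
          rw [Finset.sum_const, smul_eq_mul]
          have hc : (Finset.univ.erase i).card = s - 1 := by
            rw [Finset.card_erase_of_mem (Finset.mem_univ i)]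
            simp
          rw [hc]
  have hlt : ((s * n : ℕ) : ℚ) ≤ δ * t := by
    have := Nat.le_ceil (((s * n : ℕ) : ℚ) / δ)
    rw [← ht] at this
    rw [div_le_iff₀ hδ0] at this
    linarith
  have h1 : (S.card : ℚ) ≤ ((s - 1) * n : ℕ) := by exact_mod_cast hcard
  have h2 : (((s - 1) * n : ℕ) : ℚ) < ((s * n : ℕ) : ℚ) := by
    have : (s - 1) * n < s * n := by
      have : s - 1 < s := by omega
      exact Nat.mul_lt_mul_of_pos_right this (by omega)
    exact_mod_cast this
  linarith
end

section
/- Let G be a bipartite graph that is the graph of a (k, ε)-extractor E : {0,1}^n × {0,1}^d → {0,1}^m, where 0 < ε < 1, and suppose the average right degree (over all of L = {0,1}^n) is at most a. Then the number of left nodes x for which more than a 2ε fraction of the multiset {E(x,y) : y ∈ {0,1}^d} lands in A is less than 2^k, where A is the set of right nodes with degree at least a/ε. In other words, all but fewer than 2^k left nodes are (a/ε, 2ε)-rich. -/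
open scoped Classical

/-- `E : {0,1}^n × {0,1}^d → {0,1}^m` is a `(k,ε)`-extractor: for every left set `B` of
size at least `2^k` and every test set `A` of right nodes, the probability (for `x`
uniform in `B` and `y` uniform in `{0,1}^d`) that `E x y ∈ A` is within (strictly less
than) `ε` of the density `|A|/2^m`. -/
def IsExtractor (n d m k : ℕ) (ε : ℝ)
    (E : (Fin n → Bool) → (Fin d → Bool) → (Fin m → Bool)) : Prop :=
  ∀ B : Finset (Fin n → Bool), 2 ^ k ≤ B.card →
    ∀ A : Finset (Fin m → Bool),
      |(((B ×ˢ (Finset.univ : Finset (Fin d → Bool))).filter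
            fun q => E q.1 q.2 ∈ A).card : ℝ) / ((B.card : ℝ) * 2 ^ d)
          - (A.card : ℝ) / 2 ^ m| < ε

/-- in the graph of a `(k,ε)`-extractor whose average right degree
(counting multiplicity, i.e. total number of pairs `(x,y)` divided by `2^m`) is at most
`a`, the number of left nodes `x` for which more than a `2ε` fraction of the multiset
`{E(x,y) : y}` lands in `A` is less than `2^k`, where `A` is the set of right nodes with
degree at least `a/ε`; i.e. all but fewer than `2^k` left nodes are `(a/ε, 2ε)`-rich. -/
theorem stmt_4 (n d m k : ℕ) (ε : ℝ) (hε0 : 0 < ε) (hε1 : ε < 1)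
    (E : (Fin n → Bool) → (Fin d → Bool) → (Fin m → Bool))
    (hext : IsExtractor n d m k ε E)
    (a : ℝ) (havg : ((2 : ℝ) ^ (n + d)) / 2 ^ m ≤ a)
    (A : Finset (Fin m → Bool))
    (hA : A = Finset.univ.filter fun z : Fin m → Bool =>
      a / ε ≤ (((Finset.univ : Finset ((Fin n → Bool) × (Fin d → Bool))).filter
          fun q => E q.1 q.2 = z).card : ℝ)) :
    (Finset.univ.filter fun x : Fin n → Bool =>
        2 * ε * 2 ^ d <
          ((Finset.univ.filter fun y : Fin d → Bool => E x y ∈ A).card : ℝ)).card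
      < 2 ^ k := by
  by_contra hcon
  push_neg at hcon
  set B := (Finset.univ.filter fun x : Fin n → Bool =>
      2 * ε * 2 ^ d <
        ((Finset.univ.filter fun y : Fin d → Bool => E x y ∈ A).card : ℝ)) with hB
  have hBpos : 0 < B.card := lt_of_lt_of_le (Nat.pow_pos (n := k) (by norm_num)) hcon
  have ha0 : 0 < a := lt_of_lt_of_le (by positivity) havg
  -- |A| ≤ ε * 2^m
  have hAsmall : (A.card : ℝ) ≤ ε * 2 ^ m := by
    have h1 : ((Finset.univ : Finset ((Fin n → Bool) × (Fin d → Bool))).filter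
        fun q => E q.1 q.2 ∈ A).card
        = ∑ z ∈ A, ((Finset.univ : Finset ((Fin n → Bool) × (Fin d → Bool))).filter
            fun q => E q.1 q.2 = z).card := by
      rw [Finset.card_eq_sum_card_fiberwise
        (s := (Finset.univ : Finset ((Fin n → Bool) × (Fin d → Bool))).filter
          fun q => E q.1 q.2 ∈ A) (t := A) (f := fun q => E q.1 q.2)
        (fun q hq => (Finset.mem_filter.mp hq).2)]
      refine Finset.sum_congr rfl fun z hz => ?_
      congr 1
      ext q
      simp only [Finset.mem_filter, Finset.mem_univ, true_and]
      constructor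
      · exact fun h => h.2
      · exact fun h => ⟨h ▸ hz, h⟩
    have h2 : ((Finset.univ : Finset ((Fin n → Bool) × (Fin d → Bool))).filter
        fun q => E q.1 q.2 ∈ A).card ≤ (2 : ℕ) ^ (n + d) := by
      calc _ ≤ (Finset.univ : Finset ((Fin n → Bool) × (Fin d → Bool))).card :=
            Finset.card_filter_le _ _
        _ = 2 ^ (n + d) := by simp [Finset.card_univ, pow_add]
    have hsum : ∑ z ∈ A, (((Finset.univ : Finset ((Fin n → Bool) × (Fin d → Bool))).filter
        fun q => E q.1 q.2 = z).card : ℝ) ≤ (2 : ℝ) ^ (n + d) := by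
      have : (∑ z ∈ A, ((Finset.univ : Finset ((Fin n → Bool) × (Fin d → Bool))).filter
          fun q => E q.1 q.2 = z).card) ≤ (2 : ℕ) ^ (n + d) := h1 ▸ h2
      exact_mod_cast this
    have hlb : (A.card : ℝ) * (a / ε) ≤ ∑ z ∈ A, (((Finset.univ :
        Finset ((Fin n → Bool) × (Fin d → Bool))).filter
        fun q => E q.1 q.2 = z).card : ℝ) := by
      calc (A.card : ℝ) * (a / ε) = ∑ _z ∈ A, a / ε := by
            rw [Finset.sum_const, nsmul_eq_mul]
        _ ≤ _ := Finset.sum_le_sum fun z hz => by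
            rw [hA] at hz
            exact (Finset.mem_filter.mp hz).2
    have h2nd : (2 : ℝ) ^ (n + d) ≤ a * 2 ^ m := by
      rw [div_le_iff₀ (by positivity)] at havg; linarith
    have hfin : (A.card : ℝ) * (a / ε) ≤ a * 2 ^ m := le_trans hlb (le_trans hsum h2nd)
    rw [← mul_div_assoc, div_le_iff₀ hε0] at hfin
    have : (A.card : ℝ) * a ≤ (ε * 2 ^ m) * a := by linarith
    exact le_of_mul_le_mul_right this ha0
  -- the pair count over B is large
  have hcount : 2 * ε * 2 ^ d * B.card <
      (((B ×ˢ (Finset.univ : Finset (Fin d → Bool))).filter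
          fun q => E q.1 q.2 ∈ A).card : ℝ) := by
    have hfib : ((B ×ˢ (Finset.univ : Finset (Fin d → Bool))).filter
        fun q => E q.1 q.2 ∈ A).card
        = ∑ x ∈ B, (Finset.univ.filter fun y : Fin d → Bool => E x y ∈ A).card := by
      rw [Finset.card_eq_sum_card_fiberwise (f := Prod.fst) (t := B)
        (fun q hq => (Finset.mem_product.mp (Finset.mem_filter.mp hq).1).1)]
      refine Finset.sum_congr rfl fun x hx => ?_
      have : ((B ×ˢ (Finset.univ : Finset (Fin d → Bool))).filter
          fun q => E q.1 q.2 ∈ A).filter (fun q => q.1 = x)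
          = {x} ×ˢ (Finset.univ.filter fun y : Fin d → Bool => E x y ∈ A) := by
        ext ⟨x', y⟩
        simp only [Finset.mem_filter, Finset.mem_product, Finset.mem_singleton,
          Finset.mem_univ, true_and, and_true]
        constructor
        · rintro ⟨⟨_, hq2⟩, rfl⟩; exact ⟨rfl, hq2⟩
        · rintro ⟨rfl, hq2⟩; exact ⟨⟨hx, hq2⟩, rfl⟩
      rw [this, Finset.card_product, Finset.card_singleton, one_mul]
    rw [hfib]
    push_cast
    calc 2 * ε * 2 ^ d * B.card = ∑ _x ∈ B, 2 * ε * 2 ^ d := by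
          rw [Finset.sum_const, nsmul_eq_mul]; ring
      _ < ∑ x ∈ B, ((Finset.univ.filter fun y : Fin d → Bool => E x y ∈ A).card : ℝ) := by
          refine Finset.sum_lt_sum_of_nonempty (Finset.card_pos.mp hBpos) fun x hx => ?_
          exact (Finset.mem_filter.mp hx).2
  have hext' := hext B hcon A
  have hBc : (0 : ℝ) < (B.card : ℝ) := by exact_mod_cast hBpos
  have hratio : 2 * ε < (((B ×ˢ (Finset.univ : Finset (Fin d → Bool))).filter
      fun q => E q.1 q.2 ∈ A).card : ℝ) / ((B.card : ℝ) * 2 ^ d) := by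
    rw [lt_div_iff₀ (by positivity)]
    calc 2 * ε * ((B.card : ℝ) * 2 ^ d) = 2 * ε * 2 ^ d * B.card := by ring
      _ < _ := hcount
  have hAd : (A.card : ℝ) / 2 ^ m ≤ ε := by
    rw [div_le_iff₀ (by positivity)]; linarith
  rw [abs_lt] at hext'
  linarith [hext'.2]
end

section
/- Suppose a left node x of a bipartite graph G = (L, R, E) is (s, δ)-rich in a subset B ⊆ L, where 0 < δ < 1. Let t = ⌈s·n/δ⌉ where L ⊆ {0,1}^n, and let H be the graph on L and R × {(p_i, r) : 1 ≤ i ≤ t, 0 ≤ r < p_i} obtained by replacing each edge (x, z) of G with the t edges (x, (z, p_i, x mod p_i)) for i = 1,...,t, where p_i is the i-th prime. Then x is 2δ-rich in B for H. -/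
open scoped Classical

/-- splitting preserves richness: Let `G` be a left-regular bipartite graph
whose left nodes are `n`-bit strings viewed as integers `< 2^(n+1)`, with neighbor map
`Ngh : ℕ → Fin D → R` (the multiset of `D` neighbors of each left node), and let
`B` be a set of left nodes. Suppose `x ∈ B` is `(s,δ)`-rich in `B` for `G`, i.e. at most
a `δ` fraction of the `D` neighbors `Ngh x y` are `s`-shared in `B` (have at least `s`
left neighbors in `B`). Let `t = ⌈s·n/δ⌉` and let `H` be the graph obtained by replacing
each edge `(x, z)` of `G` by the `t` edges `(x, (z, pₖ, x mod pₖ))`, `k = 1,…,t`, where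
`pₖ` is the `k`-th prime. Then `x` is `2δ`-rich in `B` for `H`: at most a `2δ` fraction
of its `D·t` `H`-neighbors are shared in `B` (have at least two left neighbors in `B`). -/
theorem stmt_6 {R : Type*} [Fintype R] [DecidableEq R]
    (n s D t : ℕ) (hn : 1 ≤ n) (hs : 1 ≤ s) (hD : 1 ≤ D)
    (δ : ℚ) (hδ0 : 0 < δ) (hδ1 : δ < 1)
    (ht : t = ⌈((s * n : ℕ) : ℚ) / δ⌉₊)
    (B : Finset ℕ) (hB : ∀ b ∈ B, b < 2 ^ (n + 1))
    (Ngh : ℕ → Fin D → R)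
    (x : ℕ) (hxB : x ∈ B)
    (hrich : ((Finset.univ.filter fun y : Fin D =>
        s ≤ (B.filter fun b => ∃ y' : Fin D, Ngh b y' = Ngh x y).card).card : ℚ)
      ≤ δ * D) :
    ((Finset.univ.filter fun yk : Fin D × Fin t =>
        ∃ b ∈ B, b ≠ x ∧ ∃ y' : Fin D,
          Ngh b y' = Ngh x yk.1 ∧
          b % Nat.nth Nat.Prime yk.2 = x % Nat.nth Nat.Prime yk.2).card : ℚ)
      ≤ 2 * δ * (D * t) := by
  classical
  set P : ℕ → ℕ := Nat.nth Nat.Prime with hP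
  -- Lemma A: for b ≠ x in B, few primes among the first t collide
  have lemA : ∀ b ∈ B, b ≠ x →
      (Finset.univ.filter fun k : Fin t => b % P k = x % P k).card ≤ n := by
    intro b hb hbx
    set d := max b x - min b x with hd
    have hd0 : d ≠ 0 := by
      rcases Nat.lt_or_ge b x with h | h <;> omega
    have hdlt : d < 2 ^ (n + 1) := by
      have h1 := hB b hb
      have h2 := hB x hxB
      omega
    have hdvd : ∀ k : Fin t, b % P k = x % P k → P k ∣ d := by
      intro k hk
      rcases le_total b x with h | h
      · have h1 : x - b = d := by omega
        have := (Nat.modEq_iff_dvd' h).mp hk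
        rwa [h1] at this
      · have h1 : b - x = d := by omega
        have := (Nat.modEq_iff_dvd' h).mp hk.symm
        rwa [h1] at this
    have hcard : (Finset.univ.filter fun k : Fin t => b % P k = x % P k).card
        ≤ d.primeFactors.card := by
      refine Finset.card_le_card_of_injOn (fun k : Fin t => P k) ?_ ?_
      · intro k hk
        simp only [Finset.coe_filter, Finset.mem_coe, Finset.mem_filter, Set.mem_setOf_eq] at hk
        exact Nat.mem_primeFactors.mpr ⟨Nat.prime_nth_prime k, hdvd k hk.2, hd0⟩
      · intro k1 _ k2 _ h
        exact Fin.ext (Nat.nth_injective Nat.infinite_setOf_prime h)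
    have hpow : 2 ^ d.primeFactors.card ≤ d := by
      calc 2 ^ d.primeFactors.card ≤ ∏ p ∈ d.primeFactors, p :=
            Finset.pow_card_le_prod _ _ _
              (fun p hp => (Nat.prime_of_mem_primeFactors hp).two_le)
        _ ≤ d := Nat.le_of_dvd (Nat.pos_of_ne_zero hd0) (Nat.prod_primeFactors_dvd d)
    have hlt : 2 ^ d.primeFactors.card < 2 ^ (n + 1) := lt_of_le_of_lt hpow hdlt
    have := (Nat.pow_lt_pow_iff_right (a := 2) (by norm_num)).mp hlt
    omega
  -- the set of s-shared neighbors of x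
  set S : Finset (Fin D) := Finset.univ.filter fun y : Fin D =>
      s ≤ (B.filter fun b => ∃ y' : Fin D, Ngh b y' = Ngh x y).card with hS
  -- Lemma B: per non-shared neighbor, at most s*n bad primes
  have lemB : ∀ y : Fin D, y ∉ S →
      (Finset.univ.filter fun k : Fin t => ∃ b ∈ B, b ≠ x ∧ ∃ y' : Fin D,
        Ngh b y' = Ngh x y ∧ b % P k = x % P k).card ≤ s * n := by
    intro y hy
    set F := (B.filter fun b => ∃ y' : Fin D, Ngh b y' = Ngh x y).erase x with hF
    have hFs : F.card ≤ s := by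
      have h1 : ¬ s ≤ (B.filter fun b => ∃ y' : Fin D, Ngh b y' = Ngh x y).card := by
        simpa [hS] using hy
      have h2 : F.card ≤ (B.filter fun b => ∃ y' : Fin D, Ngh b y' = Ngh x y).card :=
        Finset.card_le_card (Finset.erase_subset _ _)
      omega
    have hsub : (Finset.univ.filter fun k : Fin t => ∃ b ∈ B, b ≠ x ∧ ∃ y' : Fin D,
        Ngh b y' = Ngh x y ∧ b % P k = x % P k)
        ⊆ F.biUnion (fun b => Finset.univ.filter fun k : Fin t => b % P k = x % P k) := by
      intro k hk
      simp only [Finset.mem_filter, Finset.mem_univ, true_and] at hk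
      obtain ⟨b, hbB, hbx, y', hNy, hmod⟩ := hk
      refine Finset.mem_biUnion.mpr ⟨b, ?_, ?_⟩
      · exact Finset.mem_erase.mpr ⟨hbx, Finset.mem_filter.mpr ⟨hbB, ⟨y', hNy⟩⟩⟩
      · simp [hmod]
    calc (Finset.univ.filter fun k : Fin t => ∃ b ∈ B, b ≠ x ∧ ∃ y' : Fin D,
          Ngh b y' = Ngh x y ∧ b % P k = x % P k).card
        ≤ (F.biUnion (fun b => Finset.univ.filter
            fun k : Fin t => b % P k = x % P k)).card := Finset.card_le_card hsub
      _ ≤ ∑ b ∈ F, (Finset.univ.filter fun k : Fin t => b % P k = x % P k).card :=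
          Finset.card_biUnion_le
      _ ≤ ∑ _b ∈ F, n := by
          apply Finset.sum_le_sum
          intro b hbF
          have hb := Finset.mem_erase.mp hbF
          exact lemA b (Finset.mem_filter.mp hb.2).1 hb.1
      _ = F.card * n := by simp [Finset.sum_const, mul_comm]
      _ ≤ s * n := Nat.mul_le_mul_right n hFs
  -- Main counting
  set T : Finset (Fin D × Fin t) := Finset.univ.filter fun yk : Fin D × Fin t =>
      ∃ b ∈ B, b ≠ x ∧ ∃ y' : Fin D,
        Ngh b y' = Ngh x yk.1 ∧ b % P yk.2 = x % P yk.2 with hT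
  have hsplit : (T.filter fun yk => yk.1 ∈ S).card
      + (T.filter fun yk => yk.1 ∉ S).card = T.card :=
    Finset.card_filter_add_card_filter_not _
  have hT1 : (T.filter fun yk => yk.1 ∈ S).card ≤ S.card * t := by
    have : (T.filter fun yk => yk.1 ∈ S) ⊆ S ×ˢ Finset.univ := by
      intro yk hyk
      have := (Finset.mem_filter.mp hyk).2
      exact Finset.mem_product.mpr ⟨this, Finset.mem_univ _⟩
    calc (T.filter fun yk => yk.1 ∈ S).card ≤ (S ×ˢ (Finset.univ : Finset (Fin t))).card :=
          Finset.card_le_card this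
      _ = S.card * t := by simp [Finset.card_product]
  have hT2 : (T.filter fun yk => yk.1 ∉ S).card ≤ D * (s * n) := by
    have hsub2 : (T.filter fun yk => yk.1 ∉ S)
        ⊆ (Finset.univ \ S).biUnion (fun y => ({y} : Finset (Fin D)) ×ˢ
            (Finset.univ.filter fun k : Fin t => ∃ b ∈ B, b ≠ x ∧ ∃ y' : Fin D,
              Ngh b y' = Ngh x y ∧ b % P k = x % P k)) := by
      intro yk hyk
      obtain ⟨hykT, hykS⟩ := Finset.mem_filter.mp hyk
      have hcond := (Finset.mem_filter.mp hykT).2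
      refine Finset.mem_biUnion.mpr ⟨yk.1, by simp [hykS], ?_⟩
      refine Finset.mem_product.mpr ⟨by simp, ?_⟩
      simpa using hcond
    calc (T.filter fun yk => yk.1 ∉ S).card
        ≤ ((Finset.univ \ S).biUnion (fun y => ({y} : Finset (Fin D)) ×ˢ
            (Finset.univ.filter fun k : Fin t => ∃ b ∈ B, b ≠ x ∧ ∃ y' : Fin D,
              Ngh b y' = Ngh x y ∧ b % P k = x % P k))).card := Finset.card_le_card hsub2
      _ ≤ ∑ y ∈ Finset.univ \ S, (({y} : Finset (Fin D)) ×ˢ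
            (Finset.univ.filter fun k : Fin t => ∃ b ∈ B, b ≠ x ∧ ∃ y' : Fin D,
              Ngh b y' = Ngh x y ∧ b % P k = x % P k)).card := Finset.card_biUnion_le
      _ ≤ ∑ _y ∈ (Finset.univ : Finset (Fin D)) \ S, s * n := by
          apply Finset.sum_le_sum
          intro y hyS
          have hy : y ∉ S := (Finset.mem_sdiff.mp hyS).2
          calc (({y} : Finset (Fin D)) ×ˢ _).card
              = (Finset.univ.filter fun k : Fin t => ∃ b ∈ B, b ≠ x ∧ ∃ y' : Fin D,
                  Ngh b y' = Ngh x y ∧ b % P k = x % P k).card := by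
                simp [Finset.card_product]
            _ ≤ s * n := lemB y hy
      _ ≤ D * (s * n) := by
          rw [Finset.sum_const, smul_eq_mul]
          apply Nat.mul_le_mul_right
          calc ((Finset.univ : Finset (Fin D)) \ S).card
              ≤ (Finset.univ : Finset (Fin D)).card := Finset.card_le_card (Finset.sdiff_subset)
            _ = D := by simp
  -- combine with rational arithmetic
  have hsn : ((s * n : ℕ) : ℚ) ≤ δ * t := by
    have h1 : ((s * n : ℕ) : ℚ) / δ ≤ (t : ℚ) := by
      rw [ht]
      exact Nat.le_ceil _
    rw [div_le_iff₀ hδ0] at h1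
    linarith
  have hScard : ((S.card : ℚ)) ≤ δ * D := hrich
  have hTcard : ((T.card : ℚ)) ≤ (S.card : ℚ) * t + D * ((s * n : ℕ) : ℚ) := by
    have := hsplit
    have hq : ((T.card : ℚ)) = ((T.filter fun yk => yk.1 ∈ S).card : ℚ)
        + ((T.filter fun yk => yk.1 ∉ S).card : ℚ) := by
      rw [← this]; push_cast; ring
    rw [hq]
    have h1 : ((T.filter fun yk => yk.1 ∈ S).card : ℚ) ≤ (S.card : ℚ) * t := by
      exact_mod_cast hT1
    have h2 : ((T.filter fun yk => yk.1 ∉ S).card : ℚ) ≤ (D : ℚ) * ((s * n : ℕ) : ℚ) := by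
      exact_mod_cast hT2
    linarith
  have hD0 : (0 : ℚ) ≤ D := by positivity
  calc ((T.card : ℚ)) ≤ (S.card : ℚ) * t + D * ((s * n : ℕ) : ℚ) := hTcard
    _ ≤ (δ * D) * t + D * (δ * t) := by
        have ht0 : (0 : ℚ) ≤ t := by positivity
        have := mul_le_mul_of_nonneg_right hScard ht0
        have := mul_le_mul_of_nonneg_left hsn hD0
        linarith
    _ = 2 * δ * (D * t) := by ring
end

section
/- (Existence of extractors with logarithmic entropy loss) For all n, k ≤ n, and ε > 0, there exists a (k, ε)-extractor E : {0,1}^n × {0,1}^d → {0,1}^m with m = k + d − 2·log(1/ε) − O(1) and d = log(n − k) + 2·log(1/ε) + O(1). -/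
set_option maxRecDepth 8000
set_option maxHeartbeats 1000000
open scoped Classical
open Finset Real

variable {ι Z : Type*} [Fintype ι] [DecidableEq ι] [Fintype Z] [DecidableEq Z]

lemma mgf_eq (S : Finset ι) (A : Finset Z) (t : ℝ) :
    ∑ E : ι → Z, Real.exp (t * ((S.filter fun s => E s ∈ A).card : ℝ))
      = ((A.card : ℝ) * Real.exp t + ((Fintype.card Z : ℝ) - A.card)) ^ S.card
        * (Fintype.card Z : ℝ) ^ (Fintype.card ι - S.card) := by
  classical
  have key : ∀ E : ι → Z, Real.exp (t * ((S.filter fun s => E s ∈ A).card : ℝ))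
      = ∏ i : ι, (if i ∈ S then (if E i ∈ A then Real.exp t else 1) else 1) := by
    intro E
    rw [Finset.card_filter]
    push_cast
    rw [Finset.mul_sum, Real.exp_sum]
    rw [← Finset.prod_subset (Finset.subset_univ S)]
    · refine Finset.prod_congr rfl fun i hi => ?_
      simp only [hi, if_true]
      split <;> simp
    · intro i _ hi
      simp [hi]
  simp_rw [key]
  rw [← Fintype.prod_sum (κ := fun _ : ι => Z)
        (f := fun i z => if i ∈ S then (if z ∈ A then Real.exp t else 1) else 1)]
  have inner : ∀ i : ι, (∑ z : Z, (if i ∈ S then (if z ∈ A then Real.exp t else 1) else 1))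
      = if i ∈ S then ((A.card : ℝ) * Real.exp t + ((Fintype.card Z : ℝ) - A.card))
        else (Fintype.card Z : ℝ) := by
    intro i
    by_cases hi : i ∈ S <;> simp only [hi, if_true, if_false]
    · rw [Finset.sum_ite, Finset.sum_const, Finset.sum_const,
        Finset.filter_mem_eq_inter, Finset.univ_inter, Finset.filter_not,
        Finset.filter_mem_eq_inter, Finset.univ_inter,
        ← Finset.compl_eq_univ_sdiff, Finset.card_compl]
      rw [nsmul_eq_mul, nsmul_eq_mul, Nat.cast_sub (Finset.card_le_univ A)]
      simp [mul_comm]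
    · rw [Finset.sum_const, Finset.card_univ]
      simp
  rw [Finset.prod_congr rfl fun i _ => inner i]
  rw [Finset.prod_ite, Finset.prod_const, Finset.prod_const]
  congr 2
  · simp [Finset.filter_mem_eq_inter]
  · rw [Finset.filter_not, Finset.filter_mem_eq_inter, Finset.univ_inter,
      Finset.card_sdiff_of_subset (Finset.subset_univ S)]
    rfl

lemma exp_le_one_add (t : ℝ) (h0 : 0 ≤ t) (h1 : t ≤ 1) : Real.exp t ≤ 1 + t + t ^ 2 := by
  have := Real.exp_bound' h0 h1 (n := 2) (by norm_num)
  have h2 : ∑ i ∈ Finset.range 2, t ^ i / (Nat.factorial i) = 1 + t := by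
    simp [Finset.sum_range_succ]
  rw [h2] at this
  norm_num at this
  nlinarith [sq_nonneg t]

lemma chernoff_upper [Nonempty Z] (S : Finset ι) (A : Finset Z) {ε : ℝ}
    (hε : 0 < ε) (hε1 : ε ≤ 1) :
    ((Finset.univ.filter fun E : ι → Z =>
        ((A.card : ℝ) / (Fintype.card Z) + ε) * S.card
          ≤ ((S.filter fun s => E s ∈ A).card : ℝ)).card : ℝ)
      ≤ Real.exp (-(ε ^ 2) * S.card / 4) * (Fintype.card Z : ℝ) ^ (Fintype.card ι) := by
  classical
  have hM : (0 : ℝ) < (Fintype.card Z : ℝ) := by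
    exact_mod_cast Fintype.card_pos
  set M : ℝ := (Fintype.card Z : ℝ) with hMdef
  set a : ℝ := (A.card : ℝ) with hadef
  have ha0 : 0 ≤ a := Nat.cast_nonneg _
  have haM : a ≤ M := by
    rw [hadef, hMdef]; exact_mod_cast Finset.card_le_univ A
  set p : ℝ := a / M with hpdef
  have hp0 : 0 ≤ p := div_nonneg ha0 hM.le
  have hp1 : p ≤ 1 := by rw [hpdef, div_le_one hM]; exact haM
  set t : ℝ := ε / 2 with htdef
  have ht0 : 0 < t := by positivity
  have ht1 : t ≤ 1 := by rw [htdef]; linarith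
  set T : ℝ := (S.card : ℝ) with hTdef
  have hT0 : 0 ≤ T := Nat.cast_nonneg _
  set θ : ℝ := (p + ε) * T with hθdef
  set bad := Finset.univ.filter fun E : ι → Z =>
      ((A.card : ℝ) / (Fintype.card Z) + ε) * S.card
        ≤ ((S.filter fun s => E s ∈ A).card : ℝ) with hbad
  have markov : (bad.card : ℝ) * Real.exp (t * θ)
      ≤ ∑ E : ι → Z, Real.exp (t * ((S.filter fun s => E s ∈ A).card : ℝ)) := by
    calc (bad.card : ℝ) * Real.exp (t * θ)
        = ∑ _E ∈ bad, Real.exp (t * θ) := by rw [Finset.sum_const, nsmul_eq_mul]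
      _ ≤ ∑ E ∈ bad, Real.exp (t * ((S.filter fun s => E s ∈ A).card : ℝ)) := by
          refine Finset.sum_le_sum fun E hE => ?_
          rw [Real.exp_le_exp]
          refine mul_le_mul_of_nonneg_left ?_ ht0.le
          rw [hbad, Finset.mem_filter] at hE
          exact hE.2
      _ ≤ ∑ E : ι → Z, Real.exp (t * ((S.filter fun s => E s ∈ A).card : ℝ)) := by
          refine Finset.sum_le_sum_of_subset_of_nonneg (Finset.subset_univ _)
            fun _ _ _ => (Real.exp_pos _).le
  rw [mgf_eq S A t] at markov
  have hbase : a * Real.exp t + (M - a) ≤ M * Real.exp (p * t + t ^ 2) := by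
    have h1 : Real.exp t ≤ 1 + t + t ^ 2 := exp_le_one_add t ht0.le ht1
    have h2 : a = p * M := by rw [hpdef]; field_simp
    have h3 : a * Real.exp t + (M - a) ≤ M * (1 + p * t + p * t ^ 2) := by
      rw [h2]; nlinarith
    refine h3.trans ?_
    refine mul_le_mul_of_nonneg_left ?_ hM.le
    have h4 : 1 + (p * t + p * t ^ 2) ≤ Real.exp (p * t + p * t ^ 2) := by
      have := Real.add_one_le_exp (p * t + p * t ^ 2); linarith
    have h5 : Real.exp (p * t + p * t ^ 2) ≤ Real.exp (p * t + t ^ 2) := by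
      rw [Real.exp_le_exp]; nlinarith
    linarith
  have hbase0 : 0 ≤ a * Real.exp t + (M - a) := by nlinarith [Real.exp_pos t]
  have hpow : (a * Real.exp t + (M - a)) ^ S.card
      ≤ (M * Real.exp (p * t + t ^ 2)) ^ S.card := pow_le_pow_left₀ hbase0 hbase _
  have hcard : S.card ≤ Fintype.card ι := Finset.card_le_univ S
  have h6 : (bad.card : ℝ) * Real.exp (t * θ)
      ≤ (M * Real.exp (p * t + t ^ 2)) ^ S.card * M ^ (Fintype.card ι - S.card) :=
    le_trans markov (mul_le_mul_of_nonneg_right hpow (pow_nonneg hM.le _))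
  have h7 : (M * Real.exp (p * t + t ^ 2)) ^ S.card * M ^ (Fintype.card ι - S.card)
      = Real.exp (T * (p * t + t ^ 2)) * M ^ (Fintype.card ι) := by
    rw [mul_pow, ← Real.exp_nat_mul, ← hTdef]
    rw [mul_comm (M ^ S.card), mul_assoc, ← pow_add, Nat.add_sub_cancel' hcard]
  rw [h7] at h6
  have h8 : (bad.card : ℝ) ≤ Real.exp (T * (p * t + t ^ 2) - t * θ)
      * M ^ (Fintype.card ι) := by
    rw [Real.exp_sub, div_mul_eq_mul_div, le_div_iff₀ (Real.exp_pos _)]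
    linarith
  have h9 : T * (p * t + t ^ 2) - t * θ = -(ε ^ 2) * T / 4 := by
    rw [hθdef, htdef]; ring
  rw [h9] at h8
  exact h8

lemma chernoff_abs [Nonempty Z] (S : Finset ι) (A : Finset Z) {ε : ℝ}
    (hε : 0 < ε) (hε1 : ε ≤ 1) :
    ((Finset.univ.filter fun E : ι → Z =>
        ε * S.card ≤ |((S.filter fun s => E s ∈ A).card : ℝ)
          - (A.card : ℝ) / (Fintype.card Z) * S.card|).card : ℝ)
      ≤ 2 * (Real.exp (-(ε ^ 2) * S.card / 4) * (Fintype.card Z : ℝ) ^ (Fintype.card ι)) := by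
  classical
  have hM : (0 : ℝ) < (Fintype.card Z : ℝ) := by exact_mod_cast Fintype.card_pos
  set badUp := Finset.univ.filter fun E : ι → Z =>
      ((A.card : ℝ) / (Fintype.card Z) + ε) * S.card
        ≤ ((S.filter fun s => E s ∈ A).card : ℝ) with hUp
  set badDown := Finset.univ.filter fun E : ι → Z =>
      (((Aᶜ).card : ℝ) / (Fintype.card Z) + ε) * S.card
        ≤ ((S.filter fun s => E s ∈ Aᶜ).card : ℝ) with hDown
  have hsub : (Finset.univ.filter fun E : ι → Z =>
      ε * S.card ≤ |((S.filter fun s => E s ∈ A).card : ℝ)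
        - (A.card : ℝ) / (Fintype.card Z) * S.card|) ⊆ badUp ∪ badDown := by
    intro E hE
    rw [Finset.mem_filter] at hE
    rw [Finset.mem_union, hUp, hDown, Finset.mem_filter, Finset.mem_filter]
    have hc' : ((S.filter fun s => E s ∈ Aᶜ).card : ℝ)
        = (S.card : ℝ) - ((S.filter fun s => E s ∈ A).card : ℝ) := by
      have := Finset.card_filter_add_card_filter_not
        (s := S) (p := fun s => E s ∈ A)
      have h2 : (S.filter fun s => E s ∈ Aᶜ) = (S.filter fun s => ¬ (E s ∈ A)) := by
        refine Finset.filter_congr fun s _ => ?_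
        simp
      rw [h2]
      push_cast [← this]
      ring
    have hAc : ((Aᶜ : Finset Z).card : ℝ) = (Fintype.card Z : ℝ) - A.card := by
      rw [Finset.card_compl]
      rw [Nat.cast_sub (Finset.card_le_univ A)]
    rcases le_abs.mp hE.2 with h | h
    · left
      refine ⟨Finset.mem_univ _, ?_⟩
      nlinarith
    · right
      refine ⟨Finset.mem_univ _, ?_⟩
      rw [hc', hAc]
      have : ((Fintype.card Z : ℝ) - A.card) / (Fintype.card Z)
          = 1 - (A.card : ℝ) / (Fintype.card Z) := by field_simp
      rw [this]
      nlinarith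
  calc ((Finset.univ.filter fun E : ι → Z =>
        ε * S.card ≤ |((S.filter fun s => E s ∈ A).card : ℝ)
          - (A.card : ℝ) / (Fintype.card Z) * S.card|).card : ℝ)
      ≤ ((badUp ∪ badDown).card : ℝ) := by exact_mod_cast Finset.card_le_card hsub
    _ ≤ ((badUp.card : ℕ) : ℝ) + ((badDown.card : ℕ) : ℝ) := by
        exact_mod_cast Finset.card_union_le badUp badDown
    _ ≤ 2 * (Real.exp (-(ε ^ 2) * S.card / 4) * (Fintype.card Z : ℝ) ^ (Fintype.card ι)) := by
        have h1 := chernoff_upper S A hε hε1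
        have h2 := chernoff_upper S (Aᶜ) hε hε1
        rw [← hUp] at h1
        rw [← hDown] at h2
        linarith

lemma exists_good {X Y Z : Type*} [Fintype X] [DecidableEq X] [Fintype Y] [DecidableEq Y] [Fintype Z] [DecidableEq Z] [Nonempty Z]
    (K : ℕ) {ε : ℝ} (hε : 0 < ε) (hε1 : ε ≤ 1)
    (hlt : ((Fintype.card X).choose K : ℝ) * 2 ^ (Fintype.card Z)
        * (2 * (Real.exp (-(ε ^ 2) * (K * Fintype.card Y) / 4)
            * (Fintype.card Z : ℝ) ^ (Fintype.card (X × Y)))) 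
        < (Fintype.card Z : ℝ) ^ (Fintype.card (X × Y))) :
    ∃ E : X × Y → Z, ∀ B : Finset X, B.card = K → ∀ A : Finset Z,
      |(((B ×ˢ (Finset.univ : Finset Y)).filter fun q => E q ∈ A).card : ℝ)
          - (A.card : ℝ) / (Fintype.card Z) * (K * Fintype.card Y)|
        < ε * (K * Fintype.card Y) := by
  classical
  set badAll := Finset.univ.filter fun E : X × Y → Z =>
      ∃ B ∈ (Finset.univ : Finset X).powersetCard K, ∃ A : Finset Z,
        ε * ((B ×ˢ (Finset.univ : Finset Y)).card)
          ≤ |(((B ×ˢ (Finset.univ : Finset Y)).filter fun q => E q ∈ A).card : ℝ)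
              - (A.card : ℝ) / (Fintype.card Z) * ((B ×ˢ (Finset.univ : Finset Y)).card)|
    with hbadAll
  have hsub : badAll ⊆ ((Finset.univ : Finset X).powersetCard K).biUnion fun B =>
      ((Finset.univ : Finset Z).powerset).biUnion fun A =>
        Finset.univ.filter fun E : X × Y → Z =>
          ε * ((B ×ˢ (Finset.univ : Finset Y)).card)
            ≤ |(((B ×ˢ (Finset.univ : Finset Y)).filter fun q => E q ∈ A).card : ℝ)
                - (A.card : ℝ) / (Fintype.card Z) * ((B ×ˢ (Finset.univ : Finset Y)).card)| := by
    intro E hE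
    rw [hbadAll, Finset.mem_filter] at hE
    obtain ⟨_, B, hB, A, hA⟩ := hE
    rw [Finset.mem_biUnion]
    exact ⟨B, hB, Finset.mem_biUnion.mpr ⟨A, Finset.mem_powerset.mpr (Finset.subset_univ A),
      Finset.mem_filter.mpr ⟨Finset.mem_univ _, hA⟩⟩⟩
  have hbound : (badAll.card : ℝ) < (Fintype.card Z : ℝ) ^ (Fintype.card (X × Y)) := by
    have h1 : (badAll.card : ℕ) ≤
        ∑ B ∈ (Finset.univ : Finset X).powersetCard K,
          ∑ A ∈ (Finset.univ : Finset Z).powerset,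
            (Finset.univ.filter fun E : X × Y → Z =>
              ε * ((B ×ˢ (Finset.univ : Finset Y)).card)
                ≤ |(((B ×ˢ (Finset.univ : Finset Y)).filter fun q => E q ∈ A).card : ℝ)
                    - (A.card : ℝ) / (Fintype.card Z)
                      * ((B ×ˢ (Finset.univ : Finset Y)).card)|).card := by
      refine le_trans (Finset.card_le_card hsub) ?_
      refine le_trans (Finset.card_biUnion_le) ?_
      exact Finset.sum_le_sum fun B _ => Finset.card_biUnion_le
    have h2 : ∀ B ∈ (Finset.univ : Finset X).powersetCard K,
        ∀ A : Finset Z,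
        ((Finset.univ.filter fun E : X × Y → Z =>
              ε * ((B ×ˢ (Finset.univ : Finset Y)).card)
                ≤ |(((B ×ˢ (Finset.univ : Finset Y)).filter fun q => E q ∈ A).card : ℝ)
                    - (A.card : ℝ) / (Fintype.card Z)
                      * ((B ×ˢ (Finset.univ : Finset Y)).card)|).card : ℝ)
          ≤ 2 * (Real.exp (-(ε ^ 2) * ((K * Fintype.card Y : ℕ) : ℝ) / 4)
              * (Fintype.card Z : ℝ) ^ (Fintype.card (X × Y))) := by
      intro B hB A
      have hBcard : (B ×ˢ (Finset.univ : Finset Y)).card = K * Fintype.card Y := by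
        rw [Finset.card_product, (Finset.mem_powersetCard.mp hB).2, Finset.card_univ]
      have := chernoff_abs (ι := X × Y) (B ×ˢ (Finset.univ : Finset Y)) A hε hε1
      rw [hBcard] at this
      simp only [hBcard]
      exact this
    calc (badAll.card : ℝ)
        ≤ ∑ B ∈ (Finset.univ : Finset X).powersetCard K,
          ∑ A ∈ (Finset.univ : Finset Z).powerset,
            ((Finset.univ.filter fun E : X × Y → Z =>
              ε * ((B ×ˢ (Finset.univ : Finset Y)).card)
                ≤ |(((B ×ˢ (Finset.univ : Finset Y)).filter fun q => E q ∈ A).card : ℝ)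
                    - (A.card : ℝ) / (Fintype.card Z)
                      * ((B ×ˢ (Finset.univ : Finset Y)).card)|).card : ℝ) := by
          exact_mod_cast h1
      _ ≤ ∑ B ∈ (Finset.univ : Finset X).powersetCard K,
          ∑ _A ∈ (Finset.univ : Finset Z).powerset,
            (2 * (Real.exp (-(ε ^ 2) * ((K * Fintype.card Y : ℕ) : ℝ) / 4)
              * (Fintype.card Z : ℝ) ^ (Fintype.card (X × Y)))) := by
          exact Finset.sum_le_sum fun B hB => Finset.sum_le_sum fun A _ => h2 B hB A
      _ = ((Fintype.card X).choose K : ℝ) * 2 ^ (Fintype.card Z)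
            * (2 * (Real.exp (-(ε ^ 2) * ((K : ℝ) * (Fintype.card Y : ℝ)) / 4)
              * (Fintype.card Z : ℝ) ^ (Fintype.card (X × Y)))) := by
          rw [Finset.sum_const, Finset.sum_const, Finset.card_powersetCard,
            Finset.card_powerset, Finset.card_univ, Finset.card_univ]
          push_cast
          ring
      _ < (Fintype.card Z : ℝ) ^ (Fintype.card (X × Y)) := hlt
  have hex : ∃ E : X × Y → Z, E ∉ badAll := by
    by_contra h
    push_neg at h
    have : (Finset.univ : Finset (X × Y → Z)) ⊆ badAll := fun E _ => h E
    have hcard := Finset.card_le_card this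
    rw [Finset.card_univ, Fintype.card_fun] at hcard
    have : ((Fintype.card Z : ℝ) ^ (Fintype.card (X × Y)) : ℝ) ≤ (badAll.card : ℝ) := by
      exact_mod_cast hcard
    linarith
  obtain ⟨E, hE⟩ := hex
  refine ⟨E, fun B hBK A => ?_⟩
  rw [hbadAll, Finset.mem_filter] at hE
  push_neg at hE
  have hE2 := hE (Finset.mem_univ E) B
    (Finset.mem_powersetCard.mpr ⟨Finset.subset_univ B, hBK⟩) A
  have hBcard : (B ×ˢ (Finset.univ : Finset Y)).card = K * Fintype.card Y := by
    rw [Finset.card_product, hBK, Finset.card_univ]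
  rw [hBcard] at hE2
  push_cast at hE2 ⊢
  linarith [hE2]

lemma card_powersetCard_filter_mem {α : Type*} [DecidableEq α] (B : Finset α) (x : α)
    (hx : x ∈ B) (K : ℕ) :
    ((B.powersetCard (K + 1)).filter fun S => x ∈ S).card
      = (B.card - 1).choose K := by
  classical
  rw [show #B - 1 = (B.erase x).card from (Finset.card_erase_of_mem hx).symm,
    ← Finset.card_powersetCard K (B.erase x)]
  refine Finset.card_bij' (fun S _ => S.erase x) (fun S _ => insert x S) ?_ ?_ ?_ ?_
  · intro S hS
    rw [Finset.mem_filter, Finset.mem_powersetCard] at hS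
    rw [Finset.mem_powersetCard]
    constructor
    · intro a ha
      rw [Finset.mem_erase] at ha ⊢
      exact ⟨ha.1, hS.1.1 ha.2⟩
    · rw [Finset.card_erase_of_mem hS.2, hS.1.2]; rfl
  · intro S hS
    rw [Finset.mem_powersetCard] at hS
    rw [Finset.mem_filter, Finset.mem_powersetCard]
    have hxS : x ∉ S := fun h => (Finset.mem_erase.mp (hS.1 h)).1 rfl
    refine ⟨⟨?_, ?_⟩, Finset.mem_insert_self x S⟩
    · intro a ha
      rcases Finset.mem_insert.mp ha with rfl | h
      · exact hx
      · exact Finset.mem_of_mem_erase (hS.1 h)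
    · rw [Finset.card_insert_of_notMem hxS, hS.2]
  · intro S hS
    rw [Finset.mem_filter] at hS
    exact Finset.insert_erase hS.2
  · intro S hS
    rw [Finset.mem_powersetCard] at hS
    have hxS : x ∉ S := fun h => (Finset.mem_erase.mp (hS.1 h)).1 rfl
    exact Finset.erase_insert hxS

lemma card_filter_product {X Y : Type*} (B : Finset X) (t : Finset Y) (P : X → Y → Prop)
    [∀ x y, Decidable (P x y)] :
    (((B ×ˢ t).filter fun q => P q.1 q.2).card : ℕ) = ∑ x ∈ B, (t.filter (P x)).card := by
  classical
  rw [Finset.card_filter, Finset.sum_product]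
  exact Finset.sum_congr rfl fun x _ => (Finset.card_filter _ _).symm

lemma avg_count {X : Type*} [DecidableEq X] (B : Finset X) (K : ℕ) (hK : 1 ≤ K)
    (h : X → ℕ) :
    ∑ S ∈ B.powersetCard K, ∑ x ∈ S, h x = (B.card - 1).choose (K - 1) * ∑ x ∈ B, h x := by
  classical
  have step1 : ∀ S ∈ B.powersetCard K, ∑ x ∈ S, h x = ∑ x ∈ B, if x ∈ S then h x else 0 := by
    intro S hS
    rw [Finset.sum_ite_mem, Finset.inter_eq_right.mpr (Finset.mem_powersetCard.mp hS).1]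
  rw [Finset.sum_congr rfl step1, Finset.sum_comm]
  rw [Finset.mul_sum]
  refine Finset.sum_congr rfl fun x hx => ?_
  rw [← Finset.sum_filter, Finset.sum_const, smul_eq_mul]
  congr 1
  have := card_powersetCard_filter_mem B x hx (K - 1)
  rwa [Nat.sub_add_cancel hK] at this

lemma good_to_all {X Y Z : Type*} [DecidableEq X] [Fintype Y] [Nonempty Y]
    [Fintype Z] [DecidableEq Z] [Nonempty Z]
    (E : X × Y → Z) (K : ℕ) (hK : 0 < K) {ε : ℝ} (hε : 0 < ε)
    (hgood : ∀ B : Finset X, B.card = K → ∀ A : Finset Z,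
      |(((B ×ˢ (Finset.univ : Finset Y)).filter fun q => E q ∈ A).card : ℝ)
          - (A.card : ℝ) / (Fintype.card Z) * (K * Fintype.card Y)|
        < ε * (K * Fintype.card Y)) :
    ∀ B : Finset X, K ≤ B.card → ∀ A : Finset Z,
      |(((B ×ˢ (Finset.univ : Finset Y)).filter fun q => E q ∈ A).card : ℝ)
            / ((B.card : ℝ) * (Fintype.card Y))
          - (A.card : ℝ) / (Fintype.card Z)| < ε := by
  classical
  intro B hKB A
  have hY : (0 : ℝ) < (Fintype.card Y : ℝ) := by exact_mod_cast Fintype.card_pos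
  have hNb : (0 : ℝ) < (B.card : ℝ) := by
    have : 0 < B.card := lt_of_lt_of_le hK hKB
    exact_mod_cast this
  set p : ℝ := (A.card : ℝ) / (Fintype.card Z) with hp
  set h : X → ℕ := fun x => ((Finset.univ : Finset Y).filter fun y => E (x, y) ∈ A).card
    with hh
  have hcount : ∀ B' : Finset X,
      (((B' ×ˢ (Finset.univ : Finset Y)).filter fun q => E q ∈ A).card : ℕ)
        = ∑ x ∈ B', h x := by
    intro B'
    have := card_filter_product B' (Finset.univ : Finset Y) (fun x y => E (x, y) ∈ A)
    simpa using this
  set V : ℕ := (B.card - 1).choose (K - 1) with hV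
  set W : ℕ := (B.card).choose K with hW
  have hWpos : 0 < W := Nat.choose_pos hKB
  have hVpos : 0 < V := Nat.choose_pos (by omega)
  have hid : B.card * V = W * K := by
    rw [hV, hW]
    have h1 : B.card = (B.card - 1) + 1 := by omega
    have h2 : K = (K - 1) + 1 := by omega
    rw [h1, h2]
    simp only [Nat.add_sub_cancel]
    exact Nat.add_one_mul_choose_eq (B.card - 1) (K - 1)
  have havg : ∑ S ∈ B.powersetCard K, ((∑ x ∈ S, h x : ℕ) : ℝ)
      = (V : ℝ) * ∑ x ∈ B, (h x : ℝ) := by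
    exact_mod_cast avg_count B K hK h
  have hterm : ∀ S ∈ B.powersetCard K,
      |((∑ x ∈ S, h x : ℕ) : ℝ) - p * (K * Fintype.card Y)| < ε * (K * Fintype.card Y) := by
    intro S hS
    have hScard := (Finset.mem_powersetCard.mp hS).2
    have := hgood S hScard A
    rwa [show (((S ×ˢ (Finset.univ : Finset Y)).filter fun q => E q ∈ A).card : ℝ)
        = ((∑ x ∈ S, h x : ℕ) : ℝ) by exact_mod_cast hcount S] at this
  have hne : (B.powersetCard K).Nonempty := Finset.powersetCard_nonempty.mpr hKB
  have hidR : (B.card : ℝ) * V = (W : ℝ) * K := by exact_mod_cast hid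
  have hVR : (0 : ℝ) < (V : ℝ) := by exact_mod_cast hVpos
  have hsum : |(V : ℝ) * ∑ x ∈ B, (h x : ℝ) - (W : ℝ) * (p * (K * Fintype.card Y))|
      < (W : ℝ) * (ε * (K * Fintype.card Y)) := by
    have h1 : (V : ℝ) * ∑ x ∈ B, (h x : ℝ) - (W : ℝ) * (p * (K * Fintype.card Y))
        = ∑ S ∈ B.powersetCard K, (((∑ x ∈ S, h x : ℕ) : ℝ) - p * (K * Fintype.card Y)) := by
      rw [Finset.sum_sub_distrib, havg, Finset.sum_const, nsmul_eq_mul,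
        Finset.card_powersetCard]
    rw [h1]
    calc |∑ S ∈ B.powersetCard K, (((∑ x ∈ S, h x : ℕ) : ℝ) - p * (K * Fintype.card Y))|
        ≤ ∑ S ∈ B.powersetCard K, |((∑ x ∈ S, h x : ℕ) : ℝ) - p * (K * Fintype.card Y)| :=
          Finset.abs_sum_le_sum_abs _ _
      _ < ∑ _S ∈ B.powersetCard K, ε * (K * Fintype.card Y) :=
          Finset.sum_lt_sum_of_nonempty hne hterm
      _ = (W : ℝ) * (ε * (K * Fintype.card Y)) := by
          rw [Finset.sum_const, nsmul_eq_mul, Finset.card_powersetCard]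
  have key : (V : ℝ) * |(∑ x ∈ B, (h x : ℝ)) - p * ((B.card : ℝ) * Fintype.card Y)|
      < (V : ℝ) * (ε * ((B.card : ℝ) * Fintype.card Y)) := by
    calc (V : ℝ) * |(∑ x ∈ B, (h x : ℝ)) - p * ((B.card : ℝ) * Fintype.card Y)|
        = |(V : ℝ) * ∑ x ∈ B, (h x : ℝ) - (W : ℝ) * (p * (K * Fintype.card Y))| := by
          rw [← abs_of_pos hVR, ← abs_mul, abs_of_pos hVR]
          congr 1
          linear_combination (-(p * ((Fintype.card Y : ℕ) : ℝ))) * hidR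
      _ < (W : ℝ) * (ε * (K * Fintype.card Y)) := hsum
      _ = (V : ℝ) * (ε * ((B.card : ℝ) * Fintype.card Y)) := by
          linear_combination (-(ε * ((Fintype.card Y : ℕ) : ℝ))) * hidR
  have key2 : |(∑ x ∈ B, (h x : ℝ)) - p * ((B.card : ℝ) * Fintype.card Y)|
      < ε * ((B.card : ℝ) * Fintype.card Y) := lt_of_mul_lt_mul_left key hVR.le
  have hcB : (((B ×ˢ (Finset.univ : Finset Y)).filter fun q => E q ∈ A).card : ℝ)
      = ∑ x ∈ B, (h x : ℝ) := by exact_mod_cast hcount B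
  rw [hcB, show (∑ x ∈ B, (h x : ℝ)) / ((B.card : ℝ) * (Fintype.card Y)) - p
      = ((∑ x ∈ B, (h x : ℝ)) - p * ((B.card : ℝ) * Fintype.card Y))
        / ((B.card : ℝ) * Fintype.card Y) by field_simp,
    abs_div, abs_of_pos (by positivity : (0:ℝ) < (B.card : ℝ) * Fintype.card Y),
    div_lt_iff₀ (by positivity : (0:ℝ) < (B.card : ℝ) * Fintype.card Y)]
  linarith [key2]

lemma two_pow_le_exp (j : ℕ) : (2 : ℝ) ^ j ≤ Real.exp j := by
  have h2 : (2 : ℝ) ≤ Real.exp 1 := by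
    have := Real.add_one_le_exp (1 : ℝ); linarith
  calc (2 : ℝ) ^ j ≤ (Real.exp 1) ^ j := pow_le_pow_left₀ (by norm_num) h2 j
    _ = Real.exp j := by rw [← Real.exp_nat_mul, mul_one]

lemma choose_le_exp_mul {n k r : ℕ} (hn : n = k + r) (hr : 1 ≤ r) :
    ((2 ^ n).choose (2 ^ k) : ℝ) ≤ Real.exp (2 * r * 2 ^ k) := by
  set K : ℕ := 2 ^ k with hKdef
  have hKpos : 0 < K := Nat.pow_pos (by norm_num)
  have hKR : (0 : ℝ) < ((2 : ℝ) ^ k) := by positivity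
  have h1 : ((2 ^ n).choose K) * K.factorial ≤ (2 ^ n) ^ K := by
    calc ((2 ^ n).choose K) * K.factorial = K.factorial * ((2 ^ n).choose K) := by ring
      _ = (2 ^ n).descFactorial K := (Nat.descFactorial_eq_factorial_mul_choose _ _).symm
      _ ≤ (2 ^ n) ^ K := Nat.descFactorial_le_pow _ _
  have h2 : ((K : ℝ)) ^ K ≤ Real.exp K * (K.factorial : ℝ) := by
    have hsum := Real.sum_le_exp_of_nonneg (x := (K : ℝ)) (Nat.cast_nonneg _) (K + 1)
    have hterm : ((K : ℝ)) ^ K / (K.factorial : ℝ) ≤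
        ∑ i ∈ Finset.range (K + 1), (K : ℝ) ^ i / (Nat.factorial i) := by
      refine Finset.single_le_sum (f := fun i => (K : ℝ) ^ i / (Nat.factorial i))
        (fun i _ => by positivity) (Finset.self_mem_range_succ K)
    have hfac : (0 : ℝ) < (K.factorial : ℝ) := by exact_mod_cast K.factorial_pos
    rw [div_le_iff₀ hfac] at hterm
    calc ((K : ℝ)) ^ K ≤ (∑ i ∈ Finset.range (K + 1), (K : ℝ) ^ i / (Nat.factorial i))
          * (K.factorial : ℝ) := hterm
      _ ≤ Real.exp K * (K.factorial : ℝ) := by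
          exact mul_le_mul_of_nonneg_right (hsum) hfac.le
  have h3 : (((2 ^ n).choose K : ℝ)) * ((K : ℝ)) ^ K
      ≤ Real.exp K * (((2 : ℝ) ^ k) ^ K * ((2 : ℝ) ^ r) ^ K) := by
    calc (((2 ^ n).choose K : ℝ)) * ((K : ℝ)) ^ K
        ≤ (((2 ^ n).choose K : ℝ)) * (Real.exp K * (K.factorial : ℝ)) := by
          exact mul_le_mul_of_nonneg_left h2 (Nat.cast_nonneg _)
      _ = Real.exp K * ((((2 ^ n).choose K) * K.factorial : ℕ) : ℝ) := by push_cast; ring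
      _ ≤ Real.exp K * (((2 ^ n) ^ K : ℕ) : ℝ) := by
          refine mul_le_mul_of_nonneg_left ?_ (Real.exp_pos _).le
          exact_mod_cast h1
      _ = Real.exp K * (((2 : ℝ) ^ k) ^ K * ((2 : ℝ) ^ r) ^ K) := by
          rw [hn]
          push_cast
          rw [pow_add, mul_pow]
  have hKcast : ((K : ℝ)) = (2 : ℝ) ^ k := by rw [hKdef]; push_cast; ring
  rw [hKcast] at h3
  have h4 : (((2 ^ n).choose K : ℝ)) ≤ Real.exp ((2:ℝ)^k) * ((2 : ℝ) ^ r) ^ K := by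
    have hp : (0 : ℝ) < ((2 : ℝ) ^ k) ^ K := by positivity
    refine le_of_mul_le_mul_right ?_ hp
    calc (((2 ^ n).choose K : ℝ)) * ((2 : ℝ) ^ k) ^ K
          ≤ Real.exp ((2:ℝ)^k) * (((2 : ℝ) ^ k) ^ K * ((2 : ℝ) ^ r) ^ K) := h3
        _ = Real.exp ((2:ℝ)^k) * ((2 : ℝ) ^ r) ^ K * ((2 : ℝ) ^ k) ^ K := by ring
  have h5 : ((2 : ℝ) ^ r) ^ K = (2 : ℝ) ^ (r * K) := by rw [← pow_mul]
  have h6 : (2 : ℝ) ^ (r * K) ≤ Real.exp (r * K) := by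
    have := two_pow_le_exp (r * K)
    rwa [Nat.cast_mul] at this
  have hKcast2 : ((2 : ℝ) ^ k) = (K : ℝ) := hKcast.symm
  have h8 : ((K : ℝ)) + (r : ℝ) * K ≤ 2 * r * K := by
    have hr1 : (1 : ℝ) ≤ (r : ℝ) := by exact_mod_cast hr
    have hK0 : (0 : ℝ) ≤ (K : ℝ) := Nat.cast_nonneg _
    nlinarith
  calc (((2 ^ n).choose K : ℝ)) ≤ Real.exp ((2:ℝ)^k) * ((2 : ℝ) ^ r) ^ K := h4
    _ ≤ Real.exp ((2:ℝ)^k) * Real.exp ((r : ℝ) * K) := by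
        rw [h5]
        exact mul_le_mul_of_nonneg_left h6 (Real.exp_pos _).le
    _ = Real.exp ((2:ℝ)^k + (r : ℝ) * K) := by rw [← Real.exp_add]
    _ ≤ Real.exp (2 * r * 2 ^ k) := by
        rw [Real.exp_le_exp, hKcast2]
        have hr1 : (1 : ℝ) ≤ (r : ℝ) := by exact_mod_cast hr
        have hK0 : (0 : ℝ) ≤ (K : ℝ) := Nat.cast_nonneg _
        calc ((K:ℝ)) + (r : ℝ) * K ≤ 2 * r * K := h8
          _ = 2 * (r : ℝ) * (K : ℝ) := by ring

/-- existence of extractors with logarithmic entropy loss: there is a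
constant `C` such that for all `n`, `k < n` and `0 < ε < 1` there exists a
`(k,ε)`-extractor `E : {0,1}^n × {0,1}^d → {0,1}^m` with entropy loss
`k + d − m ≤ 2·log(1/ε) + C` and seed length `d ≤ log(n−k) + 2·log(1/ε) + C`. -/
theorem stmt_17 :
    ∃ C : ℝ, ∀ (n k : ℕ) (ε : ℝ), k < n → 0 < ε → ε < 1 →
      ∃ (d m : ℕ) (E : (Fin n → Bool) → (Fin d → Bool) → (Fin m → Bool)),
        IsExtractor n d m k ε E ∧
        (k + d : ℝ) ≤ m + 2 * Real.logb 2 (1 / ε) + C ∧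
        (d : ℝ) ≤ Real.logb 2 ((n - k : ℕ)) + 2 * Real.logb 2 (1 / ε) + C := by
  classical
  refine ⟨12, fun n k ε hkn hε0 hε1 => ?_⟩
  set r : ℕ := n - k with hrdef
  have hr1 : 1 ≤ r := by omega
  have hnkr : n = k + r := by omega
  set L : ℕ := Nat.clog 2 ⌈1/ε⌉₊ with hLdef
  set s : ℕ := Nat.clog 2 r with hsdef
  set d : ℕ := s + 2 * L + 7 with hddef
  set m : ℕ := k + s + 1 with hmdef
  -- basic real facts
  have hεinv1 : (1:ℝ) < 1/ε := by rw [lt_div_iff₀ hε0]; linarith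
  have hceil2 : 2 ≤ ⌈1/ε⌉₊ := by
    have : (1:ℕ) < ⌈1/ε⌉₊ := Nat.lt_ceil.mpr (by exact_mod_cast hεinv1)
    omega
  have hL2 : (1:ℝ)/ε ≤ (2:ℝ)^L := by
    calc (1:ℝ)/ε ≤ (⌈1/ε⌉₊ : ℝ) := Nat.le_ceil _
      _ ≤ ((2^L : ℕ) : ℝ) := by exact_mod_cast Nat.le_pow_clog one_lt_two _
      _ = (2:ℝ)^L := by push_cast; ring
  have hεL : 1 ≤ ε * (2:ℝ)^L := by
    rw [div_le_iff₀ hε0] at hL2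
    linarith [hL2]
  have hrs : (r:ℝ) ≤ (2:ℝ)^s := by
    calc (r:ℝ) ≤ ((2^s : ℕ) : ℝ) := by exact_mod_cast Nat.le_pow_clog one_lt_two r
      _ = (2:ℝ)^s := by push_cast; ring
  -- upper bounds on clogs (nat)
  have hLub : (2:ℕ)^L ≤ 2 * ⌈1/ε⌉₊ := by
    have hLpos : 0 < L := Nat.clog_pos one_lt_two hceil2
    have := Nat.pow_pred_clog_lt_self one_lt_two (x := ⌈1/ε⌉₊) (by omega)
    rw [← hLdef] at this
    simp only [Nat.pred_eq_sub_one] at this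
    have h2 : (2:ℕ)^L = 2 * 2^(L-1) := by
      rw [← pow_succ']
      congr 1
      omega
    omega
  have hsub : (2:ℕ)^s ≤ 2 * r := by
    rcases Nat.eq_or_lt_of_le hr1 with h1 | h2
    · rw [hsdef, ← h1]
      simp [Nat.clog_one_right]
    · have hspos : 0 < s := Nat.clog_pos one_lt_two h2
      have := Nat.pow_pred_clog_lt_self one_lt_two (x := r) h2
      rw [← hsdef] at this
      simp only [Nat.pred_eq_sub_one] at this
      have heq : (2:ℕ)^s = 2 * 2^(s-1) := by
        rw [← pow_succ']
        congr 1
        omega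
      omega
  -- the key counting inequality
  have hKpos : 0 < (2:ℕ)^k := Nat.pow_pos (by norm_num)
  have hmain : ((2^n).choose (2^k) : ℝ) * 2 ^ (2^m)
      * (2 * (Real.exp (-(ε ^ 2) * ((2^k : ℕ) * ((2:ℕ)^d : ℕ)) / 4)
          * ((2^m : ℕ) : ℝ) ^ (2^n * 2^d)))
      < ((2^m : ℕ) : ℝ) ^ (2^n * 2^d) := by
    have hP : (0:ℝ) < ((2^m : ℕ) : ℝ) ^ (2^n * 2^d) := by positivity
    have hKR : (0:ℝ) < (2:ℝ)^k := by positivity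
    have hrR : (1:ℝ) ≤ (r:ℝ) := by exact_mod_cast hr1
    -- exponential bounds
    have hchoose : ((2^n).choose (2^k) : ℝ) ≤ Real.exp (2 * r * 2^k) :=
      choose_le_exp_mul hnkr hr1
    have h2m : ((2:ℝ)) ^ (2^m) ≤ Real.exp ((4:ℝ) * r * 2^k) := by
      have hnat : (2:ℕ)^m ≤ 4 * r * 2^k := by
        have : (2:ℕ)^m = 2^k * 2^s * 2 := by
          rw [hmdef, pow_add, pow_add, pow_one]
        rw [this]
        nlinarith [hsub]
      calc ((2:ℝ)) ^ (2^m) ≤ Real.exp ((2^m : ℕ) : ℝ) := two_pow_le_exp _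
        _ ≤ Real.exp ((4:ℝ) * r * 2^k) := by
            rw [Real.exp_le_exp]
            calc ((2^m : ℕ) : ℝ) ≤ ((4 * r * 2^k : ℕ) : ℝ) := by exact_mod_cast hnat
              _ = (4:ℝ) * r * 2^k := by push_cast; ring
    have h2e : (2:ℝ) ≤ Real.exp ((r:ℝ) * 2^k) := by
      have h1 : (1:ℝ) ≤ (r:ℝ) * 2^k := by
        have h2k : (1:ℝ) ≤ (2:ℝ)^k := by
          exact_mod_cast Nat.one_le_two_pow (n := k)
        nlinarith
      have := Real.add_one_le_exp ((r:ℝ) * 2^k)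
      linarith
    have hT : (128:ℝ) * r * 2^k ≤ ε^2 * ((2^k : ℕ) * ((2:ℕ)^d : ℕ)) := by
      have hdpow : (((2:ℕ)^d : ℕ) : ℝ) = (2:ℝ)^s * ((2:ℝ)^L)^2 * 128 := by
        push_cast
        rw [hddef, pow_add, pow_add]
        rw [two_mul, pow_add]
        ring
      have hKcast : ((2^k : ℕ) : ℝ) = (2:ℝ)^k := by push_cast; ring
      rw [hKcast, hdpow]
      have hsq : 1 ≤ (ε * (2:ℝ)^L)^2 := by nlinarith [hεL]
      have hLpos : (0:ℝ) < (2:ℝ)^L := by positivity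
      have hspos : (0:ℝ) < (2:ℝ)^s := by positivity
      nlinarith [hrs, hsq, mul_pos hKR hspos, sq_nonneg (ε * (2:ℝ)^L)]
    have hprod : ((2^n).choose (2^k) : ℝ) * 2 ^ (2^m) * 2
        ≤ Real.exp ((7:ℝ) * r * 2^k) := by
      have c2 : (0:ℝ) ≤ ((2:ℝ)) ^ (2^m) := by positivity
      calc ((2^n).choose (2^k) : ℝ) * 2 ^ (2^m) * 2
          ≤ Real.exp (2 * r * 2^k) * Real.exp ((4:ℝ) * r * 2^k)
            * Real.exp ((r:ℝ) * 2^k) := by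
            refine mul_le_mul (mul_le_mul hchoose h2m c2 (Real.exp_pos _).le) h2e
              (by norm_num) (by positivity)
        _ = Real.exp (2 * r * 2^k + (4:ℝ) * r * 2^k + (r:ℝ) * 2^k) := by
            rw [← Real.exp_add, ← Real.exp_add]
        _ = Real.exp ((7:ℝ) * r * 2^k) := by ring_nf
    have hfinal : Real.exp ((7:ℝ) * r * 2^k)
        * Real.exp (-(ε ^ 2) * ((2^k : ℕ) * ((2:ℕ)^d : ℕ)) / 4) < 1 := by
      rw [← Real.exp_add]
      have h0 : ((7:ℝ) * r * 2^k + -(ε ^ 2) * ((2^k : ℕ) * ((2:ℕ)^d : ℕ)) / 4) < 0 := by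
        have hpos : (0:ℝ) < (r:ℝ) * 2^k := by positivity
        nlinarith [hT]
      calc Real.exp ((7:ℝ) * r * 2^k + -(ε ^ 2) * ((2^k : ℕ) * ((2:ℕ)^d : ℕ)) / 4)
          < Real.exp 0 := Real.exp_lt_exp.mpr h0
        _ = 1 := Real.exp_zero
    have step : ((2^n).choose (2^k) : ℝ) * 2 ^ (2^m) * 2
        * Real.exp (-(ε ^ 2) * ((2^k : ℕ) * ((2:ℕ)^d : ℕ)) / 4)
        ≤ Real.exp ((7:ℝ) * r * 2^k)
          * Real.exp (-(ε ^ 2) * ((2^k : ℕ) * ((2:ℕ)^d : ℕ)) / 4) :=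
      mul_le_mul_of_nonneg_right hprod (Real.exp_pos _).le
    have step2 : ((2^n).choose (2^k) : ℝ) * 2 ^ (2^m) * 2
        * Real.exp (-(ε ^ 2) * ((2^k : ℕ) * ((2:ℕ)^d : ℕ)) / 4) < 1 :=
      lt_of_le_of_lt step hfinal
    have hre : ((2^n).choose (2^k) : ℝ) * 2 ^ (2^m)
        * (2 * (Real.exp (-(ε ^ 2) * ((2^k : ℕ) * ((2:ℕ)^d : ℕ)) / 4)
          * ((2^m : ℕ) : ℝ) ^ (2^n * 2^d)))
        = (((2^n).choose (2^k) : ℝ) * 2 ^ (2^m) * 2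
            * Real.exp (-(ε ^ 2) * ((2^k : ℕ) * ((2:ℕ)^d : ℕ)) / 4))
          * ((2^m : ℕ) : ℝ) ^ (2^n * 2^d) := by ring
    rw [hre]
    calc (((2^n).choose (2^k) : ℝ) * 2 ^ (2^m) * 2
            * Real.exp (-(ε ^ 2) * ((2^k : ℕ) * ((2:ℕ)^d : ℕ)) / 4))
          * ((2^m : ℕ) : ℝ) ^ (2^n * 2^d)
        < 1 * ((2^m : ℕ) : ℝ) ^ (2^n * 2^d) := mul_lt_mul_of_pos_right step2 hP
      _ = ((2^m : ℕ) : ℝ) ^ (2^n * 2^d) := one_mul _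
  -- instantiate the existence lemma
  have cX : Fintype.card (Fin n → Bool) = 2^n := by simp [Fintype.card_fun]
  have cY : Fintype.card (Fin d → Bool) = 2^d := by simp [Fintype.card_fun]
  have cZ : Fintype.card (Fin m → Bool) = 2^m := by simp [Fintype.card_fun]
  have cXY : Fintype.card ((Fin n → Bool) × (Fin d → Bool)) = 2^n * 2^d := by
    rw [Fintype.card_prod, cX, cY]
  have hlt : ((Fintype.card (Fin n → Bool)).choose (2^k) : ℝ)
      * 2 ^ (Fintype.card (Fin m → Bool))
      * (2 * (Real.exp (-(ε ^ 2) * (((2^k : ℕ)) * Fintype.card (Fin d → Bool)) / 4)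
          * (Fintype.card (Fin m → Bool) : ℝ)
            ^ (Fintype.card ((Fin n → Bool) × (Fin d → Bool)))))
      < (Fintype.card (Fin m → Bool) : ℝ)
          ^ (Fintype.card ((Fin n → Bool) × (Fin d → Bool))) := by
    rw [cX, cY, cZ, cXY]
    exact hmain
  obtain ⟨E0, hgood⟩ := exists_good (X := Fin n → Bool) (Y := Fin d → Bool)
    (Z := Fin m → Bool) (2^k) hε0 (le_of_lt hε1) hlt
  have hall := good_to_all E0 (2^k) hKpos hε0 hgood
  -- logarithmic bounds
  have hLreal : (L:ℝ) ≤ 2 + Real.logb 2 (1/ε) := by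
    have h4e : (2:ℝ)^L ≤ 4 * (1/ε) := by
      have hc : ((2:ℕ)^L : ℝ) ≤ 2 * ((⌈1/ε⌉₊:ℕ):ℝ) := by exact_mod_cast hLub
      have hceil : ((⌈1/ε⌉₊:ℕ):ℝ) < 1/ε + 1 := Nat.ceil_lt_add_one (by positivity)
      push_cast at hc
      nlinarith [hεinv1]
    have h1 : (L:ℝ) = Real.logb 2 ((2:ℝ)^L) := by
      rw [Real.logb_pow, Real.logb_self_eq_one (by norm_num : (1:ℝ) < 2), mul_one]
    have h2 : Real.logb 2 ((2:ℝ)^L) ≤ Real.logb 2 (4 * (1/ε)) :=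
      Real.logb_le_logb_of_le (by norm_num) (by positivity) h4e
    have h3 : Real.logb 2 (4 * (1/ε)) = 2 + Real.logb 2 (1/ε) := by
      rw [Real.logb_mul (by norm_num) (by positivity)]
      congr 1
      rw [show (4:ℝ) = 2^(2:ℕ) by norm_num, Real.logb_pow,
        Real.logb_self_eq_one (by norm_num : (1:ℝ) < 2), mul_one]
      norm_num
    rw [h1]
    rw [h3] at h2
    exact h2
  have hrpos : (0:ℝ) < (r:ℝ) := by exact_mod_cast hr1
  have hsreal : (s:ℝ) ≤ Real.logb 2 (r:ℝ) + 1 := by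
    have hc : ((2:ℕ)^s : ℝ) ≤ 2 * (r:ℝ) := by exact_mod_cast hsub
    push_cast at hc
    have h1 : (s:ℝ) = Real.logb 2 ((2:ℝ)^s) := by
      rw [Real.logb_pow, Real.logb_self_eq_one (by norm_num : (1:ℝ) < 2), mul_one]
    have h2 : Real.logb 2 ((2:ℝ)^s) ≤ Real.logb 2 (2 * (r:ℝ)) :=
      Real.logb_le_logb_of_le (by norm_num) (by positivity) hc
    have h3 : Real.logb 2 (2 * (r:ℝ)) = 1 + Real.logb 2 (r:ℝ) := by
      rw [Real.logb_mul (by norm_num) (by positivity)]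
      congr 1
      exact Real.logb_self_eq_one (by norm_num : (1:ℝ) < 2)
    rw [h1]
    rw [h3] at h2
    linarith
  refine ⟨d, m, fun x y => E0 (x, y), ?_, ?_, ?_⟩
  · -- extractor property
    intro B hB A
    have h := hall B hB A
    have hcY : ((Fintype.card (Fin d → Bool) : ℕ) : ℝ) = (2:ℝ)^d := by
      rw [cY]; push_cast; ring
    have hcZ : ((Fintype.card (Fin m → Bool) : ℕ) : ℝ) = (2:ℝ)^m := by
      rw [cZ]; push_cast; ring
    rw [hcY, hcZ] at h
    have hfe : ((B ×ˢ (Finset.univ : Finset (Fin d → Bool))).filter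
          fun q => E0 (q.1, q.2) ∈ A)
        = ((B ×ˢ (Finset.univ : Finset (Fin d → Bool))).filter fun q => E0 q ∈ A) := by
      refine Finset.filter_congr fun q _ => ?_
      rw [Prod.mk.eta]
    rw [← hfe] at h
    exact h
  · rw [hddef, hmdef]
    push_cast
    linarith [hLreal]
  · rw [hddef]
    push_cast
    linarith [hLreal, hsreal]
end
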